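/- arXiv:1201.4066 — 2 statements merged into one kernel-verified Lean document; each statement's English description precedes it below -/
import Mathlib

section
/- Let h ∈ ℝ[X] and ρ > 0. Then there exists ρ' > 0 such that ρ' − ‖X‖² belongs to the quadratic module generated by h and (1+h)·(ρ − ‖X‖²). Specifically, one can take ρ' = ρ(1+t/2)² where t = t(h,ρ) := Σ_α |c_α|(ρ+1)^{|α|} for h = Σ_α c_α X^α. -/
open Finset MvPolynomial

/-- `p` is a sum of squares. -/
def IsSOS {d : ℕ} (p : MvPolynomial (Fin d) ℝ) : Prop :=
  ∃ (k : ℕ) (q : Fin k → MvPolynomial (Fin d) ℝ), p = ∑ j, q j ^ 2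

/-- The quadratic module generated by a finite family `a : ι → ℝ[X]`. -/
def QM {d : ℕ} {ι : Type*} [Fintype ι] (a : ι → MvPolynomial (Fin d) ℝ) :
    Set (MvPolynomial (Fin d) ℝ) :=
  {f | ∃ (σ₀ : MvPolynomial (Fin d) ℝ) (σ : ι → MvPolynomial (Fin d) ℝ),
        IsSOS σ₀ ∧ (∀ i, IsSOS (σ i)) ∧ f = σ₀ + ∑ i, σ i * a i}

/-- `‖X‖² = X₁² + ⋯ + X_d²`. -/
noncomputable def normSq (d : ℕ) : MvPolynomial (Fin d) ℝ := ∑ i : Fin d, X i ^ 2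

/-- `t(f,ρ) = Σ_α |c_α| (ρ+1)^{|α|}`. -/
noncomputable def tBound {d : ℕ} (f : MvPolynomial (Fin d) ℝ) (ρ : ℝ) : ℝ :=
  ∑ α ∈ f.support, |f.coeff α| * (ρ + 1) ^ (α.sum fun _ k => k)

section SOS
variable {d : ℕ}

lemma isSOS_zero : IsSOS (0 : MvPolynomial (Fin d) ℝ) := ⟨0, ![], by simp⟩

lemma isSOS_sq (p : MvPolynomial (Fin d) ℝ) : IsSOS (p ^ 2) := ⟨1, ![p], by simp⟩

lemma isSOS_one : IsSOS (1 : MvPolynomial (Fin d) ℝ) := by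
  simpa using isSOS_sq (1 : MvPolynomial (Fin d) ℝ)

lemma IsSOS.add' {p q : MvPolynomial (Fin d) ℝ} (hp : IsSOS p) (hq : IsSOS q) :
    IsSOS (p + q) := by
  obtain ⟨k, f, rfl⟩ := hp
  obtain ⟨l, g, rfl⟩ := hq
  exact ⟨k + l, Fin.append f g, by rw [Fin.sum_univ_add]; simp⟩

lemma isSOS_sq_mul {p : MvPolynomial (Fin d) ℝ} (a : MvPolynomial (Fin d) ℝ)
    (hp : IsSOS p) : IsSOS (a ^ 2 * p) := by
  obtain ⟨k, f, rfl⟩ := hp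
  exact ⟨k, fun j => a * f j, by rw [Finset.mul_sum]; simp [mul_pow]⟩

private lemma isSOS_sum_sq_mul (q : MvPolynomial (Fin d) ℝ) (hq : IsSOS q) :
    ∀ (k : ℕ) (f : Fin k → MvPolynomial (Fin d) ℝ), IsSOS ((∑ j, f j ^ 2) * q)
  | 0, f => by simpa using isSOS_zero
  | (n+1), f => by
    rw [Fin.sum_univ_succ, add_mul]
    exact (isSOS_sq_mul (f 0) hq).add' (isSOS_sum_sq_mul q hq n (fun j => f j.succ))

lemma IsSOS.mul' {p q : MvPolynomial (Fin d) ℝ} (hp : IsSOS p) (hq : IsSOS q) :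
    IsSOS (p * q) := by
  obtain ⟨k, f, rfl⟩ := hp
  exact isSOS_sum_sq_mul q hq k f

lemma isSOS_C {c : ℝ} (hc : 0 ≤ c) : IsSOS (C c : MvPolynomial (Fin d) ℝ) := by
  have : (C c : MvPolynomial (Fin d) ℝ) = (C (Real.sqrt c)) ^ 2 := by
    rw [← map_pow, Real.sq_sqrt hc]
  rw [this]; exact isSOS_sq _


section NormSq
variable {d : ℕ}

lemma isSOS_normSq : IsSOS (normSq d) := ⟨d, fun i => X i, rfl⟩

lemma isSOS_normSq_sub_X_sq (i : Fin d) : IsSOS (normSq d - X i ^ 2) := by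
  refine ⟨d, fun j => if j = i then 0 else X j, ?_⟩
  have key : ∀ j : Fin d, (if j = i then (0 : MvPolynomial (Fin d) ℝ) else X j) ^ 2
      = X j ^ 2 - (if j = i then X j ^ 2 else 0) := by
    intro j; split <;> simp
  simp only [key, Finset.sum_sub_distrib, Finset.sum_ite_eq', Finset.mem_univ, if_true, normSq]

lemma isSOS_normSq_pow_sub_monomial_sq :
    ∀ (n : ℕ) (α : Fin d →₀ ℕ), (α.sum fun _ k => k) = n →
      IsSOS (normSq d ^ n - (monomial α (1:ℝ)) ^ 2) := by
  intro n
  induction n with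
  | zero =>
    intro α hα
    have hα0 : α = 0 := by
      have hz : ∀ i ∈ α.support, α i = 0 := by
        rw [Finsupp.sum] at hα
        exact Finset.sum_eq_zero_iff.mp hα
      ext i
      by_cases hi : i ∈ α.support
      · exact hz i hi
      · simpa [Finsupp.mem_support_iff] using hi
    subst hα0
    simpa [monomial_zero'] using (isSOS_zero (d := d))
  | succ n ih =>
    intro α hα
    have hne : α ≠ 0 := by rintro rfl; simp at hα
    obtain ⟨i, hi⟩ : ∃ i, α i ≠ 0 := by
      by_contra hc; push_neg at hc
      exact hne (Finsupp.ext hc)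
    set α' := α - Finsupp.single i 1 with hα'
    have hadd : α = α' + Finsupp.single i 1 := by
      ext j
      by_cases hj : j = i
      · subst hj
        simp [hα', Finsupp.single_apply, Nat.sub_add_cancel (Nat.one_le_iff_ne_zero.mpr hi)]
      · simp [hα', Finsupp.single_apply, Ne.symm hj]
    have hsum' : (α'.sum fun _ k => k) = n := by
      rw [hadd, Finsupp.sum_add_index' (fun _ => rfl) (fun _ _ _ => rfl)] at hα
      rw [Finsupp.sum_single_index rfl] at hα
      omega
    have hmono : monomial α (1:ℝ) = monomial α' 1 * X i := by
      rw [hadd, monomial_add_single, pow_one]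
    have hident : normSq d ^ (n+1) - (monomial α (1:ℝ)) ^ 2
        = normSq d * (normSq d ^ n - (monomial α' (1:ℝ)) ^ 2)
          + (monomial α' (1:ℝ)) ^ 2 * (normSq d - X i ^ 2) := by
      rw [hmono]; ring
    rw [hident]
    exact (isSOS_normSq.mul' (ih α' hsum')).add' ((isSOS_sq _).mul' (isSOS_normSq_sub_X_sq i))

end NormSq

section QMlem
variable {d : ℕ} {ι : Type*} [Fintype ι] {a : ι → MvPolynomial (Fin d) ℝ}

lemma QM.add_mem {f g : MvPolynomial (Fin d) ℝ} (hf : f ∈ QM a) (hg : g ∈ QM a) :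
    f + g ∈ QM a := by
  obtain ⟨σ₀, σ, hσ₀, hσ, rfl⟩ := hf
  obtain ⟨τ₀, τ, hτ₀, hτ, rfl⟩ := hg
  refine ⟨σ₀ + τ₀, fun i => σ i + τ i, hσ₀.add' hτ₀, fun i => (hσ i).add' (hτ i), ?_⟩
  simp only [add_mul, Finset.sum_add_distrib]
  ring

lemma QM.sos_mul_mem {s f : MvPolynomial (Fin d) ℝ} (hs : IsSOS s) (hf : f ∈ QM a) :
    s * f ∈ QM a := by
  obtain ⟨σ₀, σ, hσ₀, hσ, rfl⟩ := hf
  refine ⟨s * σ₀, fun i => s * σ i, hs.mul' hσ₀, fun i => hs.mul' (hσ i), ?_⟩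
  simp only [mul_add, Finset.mul_sum, mul_assoc]

lemma QM.sos_mem {f : MvPolynomial (Fin d) ℝ} (hf : IsSOS f) : f ∈ QM a :=
  ⟨f, fun _ => 0, hf, fun _ => isSOS_zero, by simp⟩

lemma QM.zero_mem : (0 : MvPolynomial (Fin d) ℝ) ∈ QM a := QM.sos_mem isSOS_zero

lemma QM.gen_mem [DecidableEq ι] (i : ι) : a i ∈ QM a := by
  refine ⟨0, fun j => if j = i then 1 else 0, isSOS_zero, ?_, ?_⟩
  · intro j
    by_cases hj : j = i
    · simp only [hj, if_pos rfl]; exact isSOS_one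
    · simp only [if_neg hj]; exact isSOS_zero
  · simp [ite_mul, Finset.sum_ite_eq']

lemma QM.sum_mem {β : Type*} (s : Finset β) (f : β → MvPolynomial (Fin d) ℝ)
    (hf : ∀ x ∈ s, f x ∈ QM a) : ∑ x ∈ s, f x ∈ QM a :=
  Finset.sum_induction f (· ∈ QM a) (fun _ _ => QM.add_mem) QM.zero_mem hf

end QMlem

section Gen
variable {d : ℕ} (h : MvPolynomial (Fin d) ℝ) (ρ : ℝ)

lemma qm_I :
    C ρ * (1 + h) - normSq d ∈ QM ![h, (1 + h) * (C ρ - normSq d)] := by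
  refine ⟨0, ![normSq d, 1], isSOS_zero, ?_, ?_⟩
  · intro i; fin_cases i
    · exact isSOS_normSq
    · exact isSOS_one
  · rw [Fin.sum_univ_two]
    simp only [Matrix.cons_val_zero, Matrix.cons_val_one, Matrix.head_cons]
    ring

lemma qm_Ek (hρ : 0 < ρ) (k : ℕ) :
    C (ρ ^ k) * (1 + h) - normSq d ^ k ∈ QM ![h, (1 + h) * (C ρ - normSq d)] := by
  induction k with
  | zero =>
    have h0 : (C (ρ ^ 0) * (1 + h) - normSq d ^ 0 : MvPolynomial (Fin d) ℝ)
        = (![h, (1 + h) * (C ρ - normSq d)] : Fin 2 → MvPolynomial (Fin d) ℝ) 0 := by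
      simp
    rw [h0]
    exact QM.gen_mem 0
  | succ k ih =>
    have step : C (ρ ^ (k+1)) * (1 + h) - normSq d ^ (k+1)
        = normSq d * (C (ρ ^ k) * (1 + h) - normSq d ^ k)
          + C (ρ ^ k) * ((![h, (1 + h) * (C ρ - normSq d)] : Fin 2 → MvPolynomial (Fin d) ℝ) 1) := by
      simp only [Matrix.cons_val_one, Matrix.head_cons, Matrix.cons_val_zero, pow_succ, map_mul]
      ring
    rw [step]
    exact QM.add_mem (QM.sos_mul_mem isSOS_normSq ih)
      (QM.sos_mul_mem (isSOS_C (pow_nonneg hρ.le k)) (QM.gen_mem 1))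

end Gen

lemma mem_elem (d : ℕ) (h : MvPolynomial (Fin d) ℝ) (ρ : ℝ) (hρ : 0 < ρ)
    (α : Fin d →₀ ℕ) (c : ℝ) (hc : 0 ≤ c) (u : ℝ) (hu : 0 < u)
    (ε : ℝ) (hε : ε = 1 ∨ ε = -1) :
    C (c * u ^ 2) + C (c * (ρ ^ (α.sum fun _ n => n) / (4 * u ^ 2))) * (1 + h)
      - C (c * ε) * monomial α 1 ∈ QM ![h, (1 + h) * (C ρ - normSq d)] := by
  set k := α.sum fun _ n => n with hk
  have hε2 : ε * ε = 1 := by rcases hε with rfl | rfl <;> norm_num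
  have hu0 : u ≠ 0 := hu.ne'
  have H1 : (C (1 / (4 * u ^ 2)) : MvPolynomial (Fin d) ℝ)
      = C (1 / (2 * u)) * C (1 / (2 * u)) := by
    rw [← map_mul]
    congr 1
    field_simp
    ring
  have H2 : (C ε : MvPolynomial (Fin d) ℝ)
      = C (1 / (2 * u)) * C (ε * u) + C (1 / (2 * u)) * C (ε * u) := by
    rw [← map_mul, ← map_add]
    congr 1
    field_simp
    ring
  have H3 : (C (u ^ 2) : MvPolynomial (Fin d) ℝ) = C (ε * u) * C (ε * u) := by
    rw [← map_mul]
    congr 1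
    calc u ^ 2 = (ε * ε) * u ^ 2 := by rw [hε2]; ring
      _ = ε * u * (ε * u) := by ring
  have H4 : (C (ρ ^ k / (4 * u ^ 2)) : MvPolynomial (Fin d) ℝ)
      = C (1 / (4 * u ^ 2)) * C (ρ ^ k) := by
    rw [← map_mul]
    congr 1
    ring
  have hmain : C (u ^ 2) + C (ρ ^ k / (4 * u ^ 2)) * (1 + h) - C ε * monomial α 1
      = (C (1 / (2 * u)) * monomial α 1 - C (ε * u)) ^ 2
        + C (1 / (4 * u ^ 2)) * ((C (ρ ^ k) * (1 + h) - normSq d ^ k)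
          + (normSq d ^ k - (monomial α 1) ^ 2)) := by
    linear_combination (monomial α (1:ℝ)) ^ 2 * H1 - (monomial α (1:ℝ)) * H2 + H3 + (1 + h) * H4
  have hmem : C (u ^ 2) + C (ρ ^ k / (4 * u ^ 2)) * (1 + h) - C ε * monomial α 1
      ∈ QM ![h, (1 + h) * (C ρ - normSq d)] := by
    rw [hmain]
    refine QM.add_mem (QM.sos_mem (isSOS_sq _)) (QM.sos_mul_mem (isSOS_C (by positivity)) ?_)
    exact QM.add_mem (qm_Ek h ρ hρ k)
      (QM.sos_mem (isSOS_normSq_pow_sub_monomial_sq k α hk.symm))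
  have hscale : C (c * u ^ 2) + C (c * (ρ ^ k / (4 * u ^ 2))) * (1 + h)
      - C (c * ε) * monomial α 1
      = C c * (C (u ^ 2) + C (ρ ^ k / (4 * u ^ 2)) * (1 + h) - C ε * monomial α 1) := by
    simp only [map_mul]
    ring
  rw [hscale]
  exact QM.sos_mul_mem (isSOS_C hc) hmem

theorem exists_rho'_sub_normSq_mem_QM (d : ℕ) (h : MvPolynomial (Fin d) ℝ)
    (ρ : ℝ) (hρ : 0 < ρ) :
    ∃ ρ' : ℝ, 0 < ρ' ∧ ρ' = ρ * (1 + tBound h ρ / 2) ^ 2 ∧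
      C ρ' - normSq d ∈
        QM (![h, (1 + h) * (C ρ - normSq d)] : Fin 2 → MvPolynomial (Fin d) ℝ) := by
  classical
  set t := tBound h ρ with htdef
  have ht0 : 0 ≤ t := by
    rw [htdef]; unfold tBound
    exact Finset.sum_nonneg fun α _ => mul_nonneg (abs_nonneg _) (pow_nonneg (by linarith) _)
  have h12 : (0:ℝ) < 1 + t/2 := by linarith
  refine ⟨ρ * (1 + t/2)^2, mul_pos hρ (pow_pos h12 2), rfl, ?_⟩
  have hsρ : 0 < Real.sqrt ρ := Real.sqrt_pos.mpr hρ
  have h2s : 2 * Real.sqrt ρ ≤ ρ + 1 := by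
    nlinarith [Real.sq_sqrt hρ.le, sq_nonneg (Real.sqrt ρ - 1)]
  have hsle : Real.sqrt ρ ≤ ρ + 1 := by linarith [Real.sqrt_nonneg ρ]
  have hkey : ∀ k : ℕ, 1 ≤ k → 2 * Real.sqrt ρ ^ k ≤ (ρ + 1) ^ k := by
    intro k hk
    induction k, hk using Nat.le_induction with
    | base => simpa using h2s
    | succ n hn ih =>
      calc 2 * Real.sqrt ρ ^ (n+1) = 2 * Real.sqrt ρ ^ n * Real.sqrt ρ := by ring
        _ ≤ (ρ+1)^n * Real.sqrt ρ := mul_le_mul_of_nonneg_right ih (Real.sqrt_nonneg ρ)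
        _ ≤ (ρ+1)^n * (ρ+1) := mul_le_mul_of_nonneg_left hsle (pow_nonneg (by linarith) n)
        _ = (ρ+1)^(n+1) := by ring
  set lam : (Fin d →₀ ℕ) → ℝ := fun α =>
    if α = 0 then (if 0 < coeff 0 h then 1 else 0)
    else (2 + t) * Real.sqrt ρ ^ (α.sum fun _ n => n) / 4 with hlam_def
  set kap : (Fin d →₀ ℕ) → ℝ := fun α =>
    if α = 0 then 0 else Real.sqrt ρ ^ (α.sum fun _ n => n) / (2 + t) with hkap_def
  set L := ∑ α ∈ h.support, |coeff α h| * lam α with hLdef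
  set K := ∑ α ∈ h.support, |coeff α h| * kap α with hKdef
  have h2t : (0:ℝ) < 2 + t := by linarith
  have fact2 : ∀ α : Fin d →₀ ℕ, kap α ≤ (ρ+1) ^ (α.sum fun _ n => n) / (2 + t) := by
    intro α
    by_cases hα : α = 0
    · subst hα
      simp only [hkap_def, if_pos rfl]
      positivity
    · simp only [hkap_def, if_neg hα]
      have hnum : Real.sqrt ρ ^ (α.sum fun _ n => n) ≤ (ρ+1) ^ (α.sum fun _ n => n) :=
        pow_le_pow_left₀ (Real.sqrt_nonneg ρ) hsle _
      exact div_le_div_of_nonneg_right hnum h2t.le |>.trans_eq rfl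
  have fact3 : ∀ α : Fin d →₀ ℕ,
      lam α + (1 + t/2)^2 * kap α ≤ (1 + t/4) * (ρ+1) ^ (α.sum fun _ n => n) := by
    intro α
    by_cases hα : α = 0
    · subst hα
      have hz : ((0 : Fin d →₀ ℕ).sum fun _ n => n) = 0 := by simp
      rw [hz, pow_zero]
      simp only [hlam_def, hkap_def, if_pos rfl, mul_zero, add_zero]
      by_cases hc : 0 < coeff 0 h
      · rw [if_pos hc]; linarith
      · rw [if_neg hc]; linarith
    · obtain ⟨i, hi⟩ : ∃ i, α i ≠ 0 := by
        by_contra hc; push_neg at hc; exact hα (Finsupp.ext hc)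
      have hk1 : 1 ≤ (α.sum fun _ n => n) := by
        calc (1:ℕ) ≤ α i := Nat.one_le_iff_ne_zero.mpr hi
          _ ≤ α.sum fun _ n => n := by
            rw [Finsupp.sum]
            exact Finset.single_le_sum (fun j _ => Nat.zero_le _)
              (Finsupp.mem_support_iff.mpr hi)
      have hkk := hkey _ hk1
      simp only [hlam_def, hkap_def, if_neg hα]
      have hq : (1 + t/2)^2 * (Real.sqrt ρ ^ (α.sum fun _ n => n) / (2 + t))
          = (2 + t) * Real.sqrt ρ ^ (α.sum fun _ n => n) / 4 := by
        field_simp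
        ring
      rw [hq]
      have hP0 : (0:ℝ) ≤ (ρ+1) ^ (α.sum fun _ n => n) := pow_nonneg (by linarith) _
      nlinarith [mul_le_mul_of_nonneg_left hkk (show (0:ℝ) ≤ (2+t)/4 by linarith), hP0]
  have hK : K ≤ t / (2 + t) := by
    rw [hKdef, htdef]
    unfold tBound
    rw [Finset.sum_div]
    refine Finset.sum_le_sum fun α _ => ?_
    rw [mul_div_assoc]
    exact mul_le_mul_of_nonneg_left (fact2 α) (abs_nonneg _)
  have hK1 : K < 1 := lt_of_le_of_lt hK (by rw [div_lt_one h2t]; linarith)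
  have hG : L + (1 + t/2)^2 * K ≤ t + t^2/4 := by
    calc L + (1 + t/2)^2 * K
        = ∑ α ∈ h.support, |coeff α h| * (lam α + (1 + t/2)^2 * kap α) := by
          rw [hLdef, hKdef, Finset.mul_sum, ← Finset.sum_add_distrib]
          exact Finset.sum_congr rfl fun α _ => by ring
      _ ≤ ∑ α ∈ h.support, |coeff α h| * ((1 + t/4) * (ρ+1) ^ (α.sum fun _ n => n)) :=
          Finset.sum_le_sum fun α _ => mul_le_mul_of_nonneg_left (fact3 α) (abs_nonneg _)
      _ = (1 + t/4) * t := by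
          rw [htdef]; unfold tBound
          rw [Finset.mul_sum]
          exact Finset.sum_congr rfl fun α _ => by ring
      _ = t + t^2/4 := by ring
  have h1K : (0:ℝ) < 1 - K := by linarith
  set b := ρ / (1 - K) with hbdef
  have hb0 : 0 ≤ b := le_of_lt (div_pos hρ h1K)
  have hbK : b * (1 - K) = ρ := div_mul_cancel₀ ρ h1K.ne'
  set e := ρ * (1 + t/2)^2 - ρ - b * (L + K) with hedef
  have hLK : L + K ≤ (1 - K) * (t + t^2/4) := by nlinarith [hG]
  have hbLK : b * (L + K) ≤ ρ * (t + t^2/4) := by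
    rw [hbdef, div_mul_eq_mul_div, div_le_iff₀ h1K]
    calc ρ * (L + K) ≤ ρ * ((1 - K) * (t + t^2/4)) := mul_le_mul_of_nonneg_left hLK hρ.le
      _ = ρ * (t + t^2/4) * (1 - K) := by ring
  have he0 : 0 ≤ e := by rw [hedef]; nlinarith [hbLK]
  -- membership of each summand
  have fact1 : ∀ α ∈ h.support,
      C (|coeff α h| * lam α) + C (|coeff α h| * kap α) * (1 + h)
        - monomial α (coeff α h) ∈ QM ![h, (1 + h) * (C ρ - normSq d)] := by
    intro α hαs
    by_cases hα : α = 0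
    · subst hα
      have hk0 : |coeff 0 h| * kap 0 = 0 := by simp [hkap_def]
      have hrw : C (|coeff 0 h| * lam 0) + C (|coeff 0 h| * kap 0) * (1 + h)
          - monomial 0 (coeff 0 h) = C (|coeff 0 h| * lam 0 - coeff 0 h) := by
        rw [hk0, map_zero, zero_mul, add_zero, monomial_zero', ← map_sub]
      rw [hrw]
      refine QM.sos_mem (isSOS_C ?_)
      by_cases hc : 0 < coeff 0 h
      · simp only [hlam_def, if_pos rfl, if_pos hc]
        rw [abs_of_pos hc]; linarith
      · simp only [hlam_def, if_pos rfl, if_neg hc, mul_zero]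
        push_neg at hc
        linarith
    · have hlam_val : lam α = (2 + t) * Real.sqrt ρ ^ (α.sum fun _ n => n) / 4 := by
        simp only [hlam_def, if_neg hα]
      have hlampos : 0 < lam α := by
        rw [hlam_val]
        exact div_pos (mul_pos h2t (pow_pos hsρ _)) (by norm_num)
      set u := Real.sqrt (lam α) with hudef
      have hu2 : u ^ 2 = lam α := Real.sq_sqrt hlampos.le
      have hup : 0 < u := Real.sqrt_pos.mpr hlampos
      have hss : Real.sqrt ρ ^ (α.sum fun _ n => n) * Real.sqrt ρ ^ (α.sum fun _ n => n)
          = ρ ^ (α.sum fun _ n => n) := by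
        rw [← mul_pow, Real.mul_self_sqrt hρ.le]
      have hkap_val : kap α = ρ ^ (α.sum fun _ n => n) / (4 * u ^ 2) := by
        rw [hu2, hlam_val]
        simp only [hkap_def, if_neg hα]
        rw [← hss]
        have hsk : Real.sqrt ρ ^ (α.sum fun _ n => n) ≠ 0 := (pow_pos hsρ _).ne'
        field_simp
      set ε : ℝ := if 0 < coeff α h then 1 else -1 with hεdef
      have hεc : |coeff α h| * ε = coeff α h := by
        by_cases hc : 0 < coeff α h
        · rw [hεdef, if_pos hc, abs_of_pos hc, mul_one]
        · rw [hεdef, if_neg hc, abs_of_nonpos (le_of_not_gt hc)]; ring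
      have hεor : ε = 1 ∨ ε = -1 := by
        by_cases hc : 0 < coeff α h
        · exact Or.inl (by rw [hεdef, if_pos hc])
        · exact Or.inr (by rw [hεdef, if_neg hc])
      have hmem := mem_elem d h ρ hρ α (|coeff α h|) (abs_nonneg _) u hup ε hεor
      have hrw : C (|coeff α h| * lam α) + C (|coeff α h| * kap α) * (1 + h)
          - monomial α (coeff α h)
          = C (|coeff α h| * u ^ 2)
            + C (|coeff α h| * (ρ ^ (α.sum fun _ n => n) / (4 * u ^ 2))) * (1 + h)
            - C (|coeff α h| * ε) * monomial α 1 := by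
        rw [hkap_val, ← hu2, C_mul_monomial, mul_one, hεc]
      rw [hrw]
      exact hmem
  have hsum_eq : ∑ α ∈ h.support,
      (C (|coeff α h| * lam α) + C (|coeff α h| * kap α) * (1 + h)
        - monomial α (coeff α h))
      = C L + C K * (1 + h) - h := by
    rw [Finset.sum_sub_distrib, Finset.sum_add_distrib, ← Finset.sum_mul,
      ← map_sum, ← map_sum, ← hLdef, ← hKdef, support_sum_monomial_coeff]
  have hS : C L + C K * (1 + h) - h ∈ QM ![h, (1 + h) * (C ρ - normSq d)] := by
    rw [← hsum_eq]
    exact QM.sum_mem _ _ fact1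
  have hρeq : ρ = b - b * K := by linear_combination -hbK
  have hfin : C (ρ * (1 + t/2)^2) - normSq d
      = C b * (C L + C K * (1 + h) - h) + (C ρ * (1 + h) - normSq d) + C e := by
    have hρ' : ρ * (1 + t/2)^2 = b * L + b * K + ρ + e := by rw [hedef]; ring
    rw [hρ', hρeq]
    simp only [map_add, map_sub, map_mul]
    ring
  rw [hfin]
  exact QM.add_mem (QM.add_mem (QM.sos_mul_mem (isSOS_C hb0) hS) (qm_I h ρ))
    (QM.sos_mem (isSOS_C he0))
end SOS
end

section
/- (Pólya's theorem) Let f ∈ ℝ[X_1,...,X_d] be homogeneous and strictly positive on the standard simplex Δ := {x ∈ ℝ^d : x_i ≥ 0 for all i, x_1 + ⋯ + x_d = 1}. Then there exists N ∈ ℤ_{≥0} such that all coefficients of (X_1 + ⋯ + X_d)^N · f are nonnegative. -/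
open Finset MvPolynomial

lemma coeff_sum_X_pow (d N : ℕ) (γ : Fin d →₀ ℕ) :
    ((∑ i : Fin d, X i : MvPolynomial (Fin d) ℝ) ^ N).coeff γ =
      if (∑ i, γ i) = N then (Nat.multinomial univ γ : ℝ) else 0 := by
  rw [Finset.sum_pow_eq_sum_piAntidiag]
  rw [MvPolynomial.coeff_sum]
  have key : ∀ k ∈ piAntidiag (univ : Finset (Fin d)) N,
      MvPolynomial.coeff γ ((Nat.multinomial univ k : MvPolynomial (Fin d) ℝ) * ∏ i, X i ^ k i)
      = if k = ⇑γ then (Nat.multinomial univ γ : ℝ) else 0 := by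
    intro k hk
    have h1 : (∏ i, (X i : MvPolynomial (Fin d) ℝ) ^ k i) =
        monomial (Finsupp.equivFunOnFinite.symm k) 1 := by
      rw [← MvPolynomial.prod_X_pow_eq_monomial]
      have hco : ⇑(Finsupp.equivFunOnFinite.symm k) = k := rfl
      rw [hco]
      exact (Finset.prod_subset (Finset.subset_univ _)
        (fun i _ hi => by
          rw [show k i = 0 from Finsupp.notMem_support_iff.mp hi, pow_zero])).symm
    have h2 : (Nat.multinomial univ k : MvPolynomial (Fin d) ℝ) = C (Nat.multinomial univ k : ℝ) := by
      simp
    rw [h1, h2, MvPolynomial.coeff_C_mul, MvPolynomial.coeff_monomial]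
    rcases eq_or_ne k ⇑γ with h | h
    · have : Finsupp.equivFunOnFinite.symm k = γ := by
        subst h; simp
      simp [this, h]
    · have : Finsupp.equivFunOnFinite.symm k ≠ γ := by
        intro hc; apply h; rw [← hc]; rfl
      simp [this, h]
  rw [Finset.sum_congr rfl key, Finset.sum_ite_eq' (piAntidiag univ N) (⇑γ)]
  congr 1
  rw [eq_iff_iff, mem_piAntidiag]
  simp [eq_comm]


lemma cast_descFactorial' (b a : ℕ) :
    ((b.descFactorial a : ℕ) : ℝ) = ∏ j ∈ range a, ((b : ℝ) - j) := by
  induction a with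
  | zero => simp
  | succ k ih =>
    rw [Nat.descFactorial_succ, prod_range_succ, ← ih]
    rcases le_or_gt k b with h | h
    · push_cast [h]; ring
    · rw [Nat.descFactorial_of_lt h]; simp

lemma nat_key (d N n : ℕ) (α β : Fin d →₀ ℕ) (hle : α ≤ β)
    (hβ : ∑ i, β i = N + n) (hα : ∑ i, α i = n) :
    (Nat.multinomial univ (β - α)) * ∏ i, (β i).factorial
      = N.factorial * ∏ i, (β i).descFactorial (α i) := by
  have hle' : ∀ i, α i ≤ β i := fun i => Finsupp.le_def.mp hle i
  have h1 : ∀ i : Fin d, (β i).factorial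
      = (β i - α i).factorial * (β i).descFactorial (α i) :=
    fun i => (Nat.factorial_mul_descFactorial (hle' i)).symm
  calc (Nat.multinomial univ (β - α)) * ∏ i, (β i).factorial
      = ((∏ i, ((β - α) i).factorial) * Nat.multinomial univ (β - α))
          * ∏ i, (β i).descFactorial (α i) := by
        rw [Finset.prod_congr rfl (fun i _ => h1 i), Finset.prod_mul_distrib]
        have : ∀ i : Fin d, (β - α) i = β i - α i := fun i => Finsupp.tsub_apply β α i
        rw [Finset.prod_congr rfl (fun i (_ : i ∈ univ) => congrArg Nat.factorial (this i))]
        ring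
    _ = N.factorial * ∏ i, (β i).descFactorial (α i) := by
        rw [Nat.multinomial_spec]
        congr 1
        congr 1
        have : ∀ i : Fin d, (β - α) i = β i - α i := fun i => Finsupp.tsub_apply β α i
        rw [Finset.sum_congr rfl (fun i _ => this i)]
        have : ∑ i, (β i - α i) = (∑ i, β i) - ∑ i, α i := by
          rw [Finset.sum_tsub_distrib]
          exact fun i _ => hle' i
        omega


theorem polya (d n : ℕ) (f : MvPolynomial (Fin d) ℝ) (hf : f.IsHomogeneous n)
    (hpos : ∀ x : Fin d → ℝ, (∀ i, 0 ≤ x i) → (∑ i, x i) = 1 → 0 < eval x f) :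
    ∃ N : ℕ, ∀ α : Fin d →₀ ℕ, 0 ≤ ((∑ i : Fin d, X i) ^ N * f).coeff α := by
  classical
  -- the perturbed polynomial function
  set F : ℝ × (Fin d → ℝ) → ℝ := fun p =>
    ∑ α ∈ f.support, f.coeff α * ∏ i, ∏ j ∈ range (α i), (p.2 i - j * p.1) with hF
  have hFc : Continuous F := by fun_prop
  -- F (0, x) = eval x f
  have hF0 : ∀ x : Fin d → ℝ, F (0, x) = eval x f := by
    intro x
    rw [hF, eval_eq']
    refine Finset.sum_congr rfl fun α _ => ?_
    congr 1
    exact Finset.prod_congr rfl fun i _ => by simp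
  -- tube lemma
  have hsub : ({(0 : ℝ)} ×ˢ stdSimplex ℝ (Fin d)) ⊆ F ⁻¹' Set.Ioi 0 := by
    rintro ⟨t, x⟩ ⟨ht, hx⟩
    simp only [Set.mem_singleton_iff] at ht
    subst ht
    have := hpos x hx.1 hx.2
    simpa [hF0 x] using this
  obtain ⟨u, v, hu, hv, h0u, hΔv, huv⟩ :=
    generalized_tube_lemma isCompact_singleton (isCompact_stdSimplex ℝ (Fin d))
      (hFc.isOpen_preimage _ isOpen_Ioi) hsub
  obtain ⟨δ, hδ, hball⟩ := Metric.isOpen_iff.mp hu 0 (h0u rfl)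
  -- choose N
  set N : ℕ := ⌈δ⁻¹⌉₊ + 1 with hN
  refine ⟨N, fun β => ?_⟩
  -- homogeneity of the product
  have hhom : ((∑ i : Fin d, X i) ^ N * f).IsHomogeneous (N + n) := by
    have h1 : ((∑ i : Fin d, X i : MvPolynomial (Fin d) ℝ)).IsHomogeneous 1 :=
      IsHomogeneous.sum univ _ 1 fun i _ => isHomogeneous_X ℝ i
    have h2 := (h1.pow N).mul hf
    simpa using h2
  have hdeg : β.degree = ∑ i, β i :=
    Finset.sum_subset (subset_univ _) fun i _ h => Finsupp.notMem_support_iff.mp h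
  by_cases hβ : ∑ i, β i = N + n
  swap
  · rw [hhom.coeff_eq_zero (by rw [hdeg]; exact hβ)]
  -- main case
  have hs0 : 0 < N + n := by positivity
  set sR : ℝ := ((N + n : ℕ) : ℝ) with hsR
  have hsRpos : 0 < sR := by rw [hsR]; exact_mod_cast hs0
  set x : Fin d → ℝ := fun i => (β i : ℝ) / sR with hxdef
  set t : ℝ := sR⁻¹ with htdef
  have hxmem : x ∈ stdSimplex ℝ (Fin d) := by
    constructor
    · intro i; exact div_nonneg (by positivity) hsRpos.le
    · rw [hxdef]
      simp only
      rw [← Finset.sum_div]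
      rw [show ∑ i, ((β i : ℝ)) = ((∑ i, β i : ℕ) : ℝ) by push_cast; rfl, hβ]
      field_simp [hsR]
      rfl
  have htu : t ∈ u := by
    apply hball
    rw [Metric.mem_ball, Real.dist_eq, sub_zero, abs_of_pos (by positivity)]
    rw [htdef]
    rw [inv_lt_comm₀ hsRpos hδ] -- δ⁻¹ < sR
    calc δ⁻¹ ≤ ⌈δ⁻¹⌉₊ := Nat.le_ceil _
    _ < sR := by rw [hsR]; push_cast; linarith [Nat.cast_nonneg (α := ℝ) n, show (N:ℝ) = ⌈δ⁻¹⌉₊ + 1 by rw [hN]; push_cast; ring]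
  have hFt : 0 < F (t, x) := huv (Set.mk_mem_prod htu (hΔv hxmem))
  -- degrees of support elements
  have hsupdeg : ∀ α ∈ f.support, ∑ i, α i = n := by
    intro α hα
    have h1 : α.degree = n := by
      by_contra h
      exact (MvPolynomial.mem_support_iff.mp hα) (hf.coeff_eq_zero h)
    rw [← h1]
    exact (Finset.sum_subset (subset_univ _)
      fun i _ h => Finsupp.notMem_support_iff.mp h).symm
  -- Step 1 : coefficient formula
  have step1 : ((∑ i : Fin d, X i) ^ N * f).coeff β
      = ∑ α ∈ f.support, (if α ≤ β then
          (Nat.multinomial univ (β - α) : ℝ) * f.coeff α else 0) := by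
    conv_lhs => rw [f.as_sum, Finset.mul_sum, coeff_sum]
    refine Finset.sum_congr rfl fun α hα => ?_
    rw [coeff_mul_monomial']
    by_cases hle : α ≤ β
    · rw [if_pos hle, if_pos hle, coeff_sum_X_pow, if_pos]
      have hle' : ∀ i, α i ≤ β i := fun i => Finsupp.le_def.mp hle i
      have h2 : ∑ i, (β - α) i = ∑ i, (β i - α i) :=
        Finset.sum_congr rfl fun i _ => Finsupp.tsub_apply β α i
      have h3 : ∑ i, (β i - α i) = (∑ i, β i) - ∑ i, α i :=
        Finset.sum_tsub_distrib univ fun i _ => hle' i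
      have h4 := hsupdeg α hα
      omega
    · rw [if_neg hle, if_neg hle]
  -- Step 2 : multiply by ∏ β i !
  have step2 : ((∑ i : Fin d, X i) ^ N * f).coeff β * ∏ i, ((β i).factorial : ℝ)
      = (N.factorial : ℝ) *
        ∑ α ∈ f.support, f.coeff α * ∏ i, ((β i).descFactorial (α i) : ℝ) := by
    rw [step1, Finset.sum_mul, Finset.mul_sum]
    refine Finset.sum_congr rfl fun α hα => ?_
    by_cases hle : α ≤ β
    · rw [if_pos hle]
      have := nat_key d N n α β hle hβ (hsupdeg α hα)
      have hcast : (Nat.multinomial univ (β - α) : ℝ) * ∏ i, ((β i).factorial : ℝ)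
          = (N.factorial : ℝ) * ∏ i, ((β i).descFactorial (α i) : ℝ) := by
        push_cast
        exact_mod_cast congrArg (fun m : ℕ => (m : ℝ)) this
      calc (Nat.multinomial univ (β - α) : ℝ) * f.coeff α * ∏ i, ((β i).factorial : ℝ)
          = f.coeff α * ((Nat.multinomial univ (β - α) : ℝ) * ∏ i, ((β i).factorial : ℝ)) := by ring
        _ = f.coeff α * ((N.factorial : ℝ) * ∏ i, ((β i).descFactorial (α i) : ℝ)) := by rw [hcast]
        _ = (N.factorial : ℝ) * (f.coeff α * ∏ i, ((β i).descFactorial (α i) : ℝ)) := by ring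
    · rw [if_neg hle, zero_mul]
      obtain ⟨i0, hi0⟩ : ∃ i, β i < α i := by
        by_contra h
        push_neg at h
        exact hle (Finsupp.le_def.mpr h)
      have : ((β i0).descFactorial (α i0) : ℝ) = 0 := by
        rw [Nat.descFactorial_of_lt hi0]; norm_cast
      rw [Finset.prod_eq_zero (Finset.mem_univ i0) this]
      ring
  -- Step 3 : descFactorial product equals sR^n * F-term
  have step3 : ∀ α ∈ f.support,
      (∏ i, ((β i).descFactorial (α i) : ℝ))
        = sR ^ n * ∏ i, ∏ j ∈ range (α i), (x i - j * t) := by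
    intro α hα
    have h1 : ∀ i : Fin d, ((β i).descFactorial (α i) : ℝ)
        = ∏ j ∈ range (α i), (sR * (x i - j * t)) := by
      intro i
      rw [cast_descFactorial']
      refine Finset.prod_congr rfl fun j hj => ?_
      rw [hxdef, htdef]
      field_simp
    rw [Finset.prod_congr rfl fun i _ => h1 i]
    have h2 : ∀ i : Fin d, ∏ j ∈ range (α i), (sR * (x i - j * t))
        = sR ^ (α i) * ∏ j ∈ range (α i), (x i - j * t) := by
      intro i
      rw [Finset.prod_mul_distrib, Finset.prod_const, Finset.card_range]
    rw [Finset.prod_congr rfl fun i _ => h2 i, Finset.prod_mul_distrib,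
      Finset.prod_pow_eq_pow_sum, hsupdeg α hα]
  -- combine
  have key : ((∑ i : Fin d, X i) ^ N * f).coeff β * ∏ i, ((β i).factorial : ℝ)
      = (N.factorial : ℝ) * sR ^ n * F (t, x) := by
    rw [step2]
    have hFtx : F (t, x) = ∑ α ∈ f.support, f.coeff α *
        ∏ i, ∏ j ∈ range (α i), (x i - (j : ℝ) * t) := rfl
    rw [hFtx, Finset.mul_sum, Finset.mul_sum]
    refine Finset.sum_congr rfl fun α hα => ?_
    rw [step3 α hα]
    ring
  have hprodpos : 0 < ∏ i, ((β i).factorial : ℝ) := by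
    apply Finset.prod_pos
    intro i _
    exact_mod_cast Nat.factorial_pos _
  have : 0 ≤ ((∑ i : Fin d, X i) ^ N * f).coeff β * ∏ i, ((β i).factorial : ℝ) := by
    rw [key]
    have : (0:ℝ) ≤ (N.factorial : ℝ) * sR ^ n := by positivity
    nlinarith
  exact le_of_not_gt fun hc => absurd this (not_le.mpr (mul_neg_of_neg_of_pos hc hprodpos))
end
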